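/- Every uniquely weakly D-nil-clean ring R is either a D-ring or isomorphic (as a ring) to a product A × B of two uniquely weakly nil-clean rings A and B. -/

import Mathlib

universe u v

/-- An element `e` is a very idempotent if `e` or `-e` is an idempotent. -/
def IsVeryIdempotent {R : Type u} [Ring R] (e : R) : Prop :=
  IsIdempotentElem e ∨ IsIdempotentElem (-e)

/-- `a` is uniquely weakly nil-clean: it is a sum of a nilpotent and a very idempotent,
and for any two such representations `a = w₁ + e₁ = w₂ + e₂` one has `e₁ ^ 2 = e₂ ^ 2`. -/
def IsUniquelyWeaklyNilClean {R : Type u} [Ring R] (a : R) : Prop :=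
  (∃ w e : R, IsNilpotent w ∧ IsVeryIdempotent e ∧ a = w + e) ∧
  ∀ w₁ e₁ w₂ e₂ : R, IsNilpotent w₁ → IsVeryIdempotent e₁ → IsNilpotent w₂ →
    IsVeryIdempotent e₂ → a = w₁ + e₁ → a = w₂ + e₂ → e₁ ^ 2 = e₂ ^ 2

/-- A ring is uniquely weakly nil-clean if every element is. -/
def UniquelyWeaklyNilCleanRing (R : Type u) [Ring R] : Prop :=
  ∀ a : R, IsUniquelyWeaklyNilClean a

/-- `a` is uniquely nil-clean: it is a sum of a nilpotent and an idempotent,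
and for any two such representations `a = w₁ + e₁ = w₂ + e₂` one has `e₁ = e₂`. -/
def IsUniquelyNilClean {R : Type u} [Ring R] (a : R) : Prop :=
  (∃ w e : R, IsNilpotent w ∧ IsIdempotentElem e ∧ a = w + e) ∧
  ∀ w₁ e₁ w₂ e₂ : R, IsNilpotent w₁ → IsIdempotentElem e₁ → IsNilpotent w₂ →
    IsIdempotentElem e₂ → a = w₁ + e₁ → a = w₂ + e₂ → e₁ = e₂

/-- A ring is uniquely nil-clean if every element is. -/
def UniquelyNilCleanRing (R : Type u) [Ring R] : Prop :=
  ∀ a : R, IsUniquelyNilClean a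

/-- `a` is a zero-divisor: there are nonzero `b, c` with `a * b = 0` and `c * a = 0`. -/
def IsZeroDivisorPair {R : Type u} [Ring R] (a : R) : Prop :=
  ∃ b c : R, b ≠ 0 ∧ c ≠ 0 ∧ a * b = 0 ∧ c * a = 0

/-- A ring is abelian if every idempotent is central. -/
def AbelianRing (R : Type u) [Ring R] : Prop :=
  ∀ e : R, IsIdempotentElem e → ∀ x : R, e * x = x * e

/-- A ring is periodic if every element satisfies `a ^ m = a ^ n` for distinct positive `m, n`. -/
def PeriodicRing (R : Type u) [Ring R] : Prop :=
  ∀ a : R, ∃ m n : ℕ, 0 < m ∧ 0 < n ∧ m ≠ n ∧ a ^ m = a ^ n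

/-- A Boolean ring: every element is idempotent. -/
def IsBooleanRing (R : Type u) [Ring R] : Prop :=
  ∀ a : R, IsIdempotentElem a

/-- `R / J(R)` is isomorphic to `S`, expressed via a surjective ring homomorphism
whose kernel is exactly the Jacobson radical of `R`. -/
def QuotJacobsonIsoTo (R : Type u) [Ring R] (S : Type v) [Ring S] : Prop :=
  ∃ f : R →+* S, Function.Surjective f ∧
    ∀ a : R, f a = 0 ↔ a ∈ Ideal.jacobson (⊥ : Ideal R)

variable {R : Type u} [Ring R]

def corner (f : R) : NonUnitalSubring R where
  carrier := {x | f * x = x}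
  zero_mem' := mul_zero f
  add_mem' := by
    intro a b ha hb
    simp only [Set.mem_setOf_eq] at *
    rw [mul_add, ha, hb]
  neg_mem' := by
    intro a ha
    simp only [Set.mem_setOf_eq] at *
    rw [mul_neg, ha]
  mul_mem' := by
    intro a b ha hb
    simp only [Set.mem_setOf_eq] at *
    rw [← mul_assoc, ha]

theorem mem_corner {f x : R} : x ∈ corner f ↔ f * x = x := Iff.rfl

def cornerRing (f : R) (hf : f * f = f) (hc : ∀ x, f * x = x * f) : Ring (corner f) :=
  { (inferInstance : NonUnitalRing (corner f)) with
    one := ⟨f, hf⟩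
    one_mul := fun a => Subtype.ext a.2
    mul_one := fun a => Subtype.ext (by
      show a.val * f = a.val
      rw [← hc, a.2]) }

theorem corner_pow_val (f : R) (hf : f * f = f) (hc : ∀ x, f * x = x * f)
    (a : corner f) (n : ℕ) :
    letI := cornerRing f hf hc
    ((a ^ (n + 1) : corner f) : R) = (a : R) ^ (n + 1) := by
  letI := cornerRing f hf hc
  induction n with
  | zero =>
    rw [pow_one, pow_one]
  | succ n ih =>
    rw [pow_succ a (n+1), pow_succ (a : R) (n+1), ← ih]
    rfl

theorem idem_absorb_left
    (h : ∀ a : R, IsZeroDivisorPair a → IsUniquelyWeaklyNilClean a)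
    (f u : R) (hf : f * f = f) (hf1 : f ≠ 1)
    (hfu : f * u = u) (huf : u * f = 0) (huu : u * u = 0) : u = 0 := by
  have hgg : (f + u) * (f + u) = f + u := by
    rw [add_mul, mul_add, mul_add, hf, hfu, huf, huu, add_zero, add_zero]
  have hg1 : f + u ≠ 1 := by
    intro hgone
    have h2 : (1 - f) * (f + u) = 0 := by
      rw [mul_add, sub_mul, one_mul, hf, sub_self, zero_add, sub_mul, one_mul, hfu, sub_self]
    rw [hgone, mul_one, sub_eq_zero] at h2
    exact hf1 h2.symm
  have hzd : IsZeroDivisorPair (f + u) := by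
    refine ⟨1 - (f + u), 1 - (f + u), ?_, ?_, ?_, ?_⟩ <;>
      first
        | (intro h0; rw [sub_eq_zero] at h0; exact hg1 h0.symm)
        | rw [mul_sub, mul_one, hgg, sub_self]
        | rw [sub_mul, one_mul, hgg, sub_self]
  obtain ⟨-, huniq⟩ := h (f + u) hzd
  have key : (f + u) ^ 2 = f ^ 2 :=
    huniq 0 (f + u) u f ⟨1, pow_one 0⟩ (Or.inl hgg) ⟨2, by rw [pow_two, huu]⟩ (Or.inl hf)
      (by rw [zero_add]) (add_comm f u)
  rw [pow_two, pow_two, hgg, hf] at key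
  exact add_eq_left.mp key

theorem idem_absorb_right
    (h : ∀ a : R, IsZeroDivisorPair a → IsUniquelyWeaklyNilClean a)
    (f u : R) (hf : f * f = f) (hf1 : f ≠ 1)
    (hfu : f * u = 0) (huf : u * f = u) (huu : u * u = 0) : u = 0 := by
  have hgg : (f + u) * (f + u) = f + u := by
    rw [add_mul, mul_add, mul_add, hf, hfu, huf, huu, add_zero, add_zero]
  have hg1 : f + u ≠ 1 := by
    intro hgone
    have h2 : (f + u) * (1 - f) = 0 := by
      rw [add_mul, mul_sub, mul_one, hf, sub_self, zero_add, mul_sub, mul_one, huf, sub_self]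
    rw [hgone, one_mul, sub_eq_zero] at h2
    exact hf1 h2.symm
  have hzd : IsZeroDivisorPair (f + u) := by
    refine ⟨1 - (f + u), 1 - (f + u), ?_, ?_, ?_, ?_⟩ <;>
      first
        | (intro h0; rw [sub_eq_zero] at h0; exact hg1 h0.symm)
        | rw [mul_sub, mul_one, hgg, sub_self]
        | rw [sub_mul, one_mul, hgg, sub_self]
  obtain ⟨-, huniq⟩ := h (f + u) hzd
  have key : (f + u) ^ 2 = f ^ 2 :=
    huniq 0 (f + u) u f ⟨1, pow_one 0⟩ (Or.inl hgg) ⟨2, by rw [pow_two, huu]⟩ (Or.inl hf)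
      (by rw [zero_add]) (add_comm f u)
  rw [pow_two, pow_two, hgg, hf] at key
  exact add_eq_left.mp key

theorem central_of_h (f : R) (hf : f * f = f) (hf1 : f ≠ 1)
    (h : ∀ a : R, IsZeroDivisorPair a → IsUniquelyWeaklyNilClean a) :
    ∀ x : R, f * x = x * f := by
  intro x
  have e1 : (1 - f) * f = 0 := by rw [sub_mul, one_mul, hf, sub_self]
  have e3 : f * (1 - f) = 0 := by rw [mul_sub, mul_one, hf, sub_self]
  have step1 : f * x * (1 - f) = 0 := by
    apply idem_absorb_left h f _ hf hf1
    · rw [← mul_assoc, ← mul_assoc, hf]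
    · rw [mul_assoc, e1, mul_zero]
    · have e2 : (1 - f) * (f * x * (1 - f)) = 0 := by
        rw [← mul_assoc, ← mul_assoc, e1, zero_mul, zero_mul]
      rw [mul_assoc (f * x) (1 - f), e2, mul_zero]
  have e4 : f * ((1 - f) * x * f) = 0 := by
    rw [← mul_assoc, ← mul_assoc, e3, zero_mul, zero_mul]
  have step2 : (1 - f) * x * f = 0 := by
    apply idem_absorb_right h f _ hf hf1 e4
    · rw [mul_assoc, hf]
    · rw [mul_assoc ((1 - f) * x) f, e4, mul_zero]
  rw [mul_sub, mul_one, sub_eq_zero] at step1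
  rw [sub_mul, one_mul, sub_mul, sub_eq_zero] at step2
  rw [step1, step2]

theorem corner_uwnc (f : R) (hf : f * f = f) (hc : ∀ x, f * x = x * f) (hf1 : f ≠ 1)
    (h : ∀ a : R, IsZeroDivisorPair a → IsUniquelyWeaklyNilClean a) :
    letI := cornerRing f hf hc
    UniquelyWeaklyNilCleanRing (corner f) := by
  letI := cornerRing f hf hc
  intro a
  have hx : f * (a : R) = a := a.2
  have hxf : (a : R) * f = a := by rw [← hc, hx]
  have h1f : (1 : R) - f ≠ 0 := fun h0 => hf1 (by rwa [sub_eq_zero, eq_comm] at h0)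
  have hzd : IsZeroDivisorPair (a : R) := by
    refine ⟨1 - f, 1 - f, h1f, h1f, ?_, ?_⟩
    · rw [mul_sub, mul_one, hxf, sub_self]
    · rw [sub_mul, one_mul, hx, sub_self]
  obtain ⟨⟨w, e, hw, he, heq⟩, huniq⟩ := h (a : R) hzd
  have key : ∀ y : R, (f * y) * (f * y) = f * (y * y) := by
    intro y
    have h1 : f * y * f = f * y := by rw [mul_assoc, ← hc y, ← mul_assoc, hf]
    rw [← mul_assoc (f * y) f y, h1, mul_assoc]
  constructor
  · -- existence
    refine ⟨⟨f * w, show f * (f * w) = f * w by rw [← mul_assoc, hf]⟩,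
      ⟨f * e, show f * (f * e) = f * e by rw [← mul_assoc, hf]⟩, ?_, ?_, ?_⟩
    · obtain ⟨n, hn⟩ := hw
      refine ⟨n + 1, ?_⟩
      apply Subtype.ext
      rw [corner_pow_val f hf hc]
      show (f * w) ^ (n + 1) = ((0 : corner f) : R)
      have hcomm : Commute f w := hc w
      rw [hcomm.mul_pow, pow_succ w n, hn, zero_mul, mul_zero]
      rfl
    · rcases he with hee | hee
      · left
        apply Subtype.ext
        show (f * e) * (f * e) = f * e
        rw [key, hee]
      · right
        apply Subtype.ext
        show (-(f * e)) * (-(f * e)) = -(f * e)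
        have hee' : e * e = -e := by
          have h2 : (-e) * (-e) = -e := hee
          rwa [neg_mul_neg] at h2
        rw [neg_mul_neg, key, hee', mul_neg]
    · apply Subtype.ext
      show (a : R) = f * w + f * e
      rw [← mul_add, ← heq, hx]
  · -- uniqueness
    intro w₁ e₁ w₂ e₂ hw₁ he₁ hw₂ he₂ heq₁ heq₂
    have nil : ∀ w' : corner f, IsNilpotent w' → IsNilpotent (w' : R) := by
      rintro w' ⟨n, hn⟩
      refine ⟨n + 1, ?_⟩
      have : (w' ^ (n + 1) : corner f) = 0 := by rw [pow_succ, hn]; exact zero_mul _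
      have hval := corner_pow_val f hf hc w' n
      rw [this] at hval
      exact hval.symm
    have vid : ∀ e' : corner f, IsVeryIdempotent e' → IsVeryIdempotent (e' : R) := by
      rintro e' (hee | hee)
      · exact Or.inl (congrArg Subtype.val hee)
      · exact Or.inr (congrArg Subtype.val hee)
    have heqv₁ : (a : R) = (w₁ : R) + (e₁ : R) := congrArg Subtype.val heq₁
    have heqv₂ : (a : R) = (w₂ : R) + (e₂ : R) := congrArg Subtype.val heq₂
    have := huniq _ _ _ _ (nil w₁ hw₁) (vid e₁ he₁) (nil w₂ hw₂) (vid e₂ he₂) heqv₁ heqv₂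
    apply Subtype.ext
    show ((e₁ ^ 2 : corner f) : R) = ((e₂ ^ 2 : corner f) : R)
    rw [pow_two, pow_two] at this ⊢
    exact this

def cornerEquiv (f : R) (hf : f * f = f) (hc : ∀ x, f * x = x * f)
    (hf' : (1 - f) * (1 - f) = 1 - f) (hc' : ∀ x, (1 - f) * x = x * (1 - f)) :
    letI := cornerRing f hf hc
    letI := cornerRing (1 - f) hf' hc'
    R ≃+* corner f × corner (1 - f) := by
  letI := cornerRing f hf hc
  letI := cornerRing (1 - f) hf' hc'
  have e1 : (1 - f) * f = 0 := by rw [sub_mul, one_mul, hf, sub_self]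
  have e3 : f * (1 - f) = 0 := by rw [mul_sub, mul_one, hf, sub_self]
  exact
  { toFun := fun x =>
      (⟨f * x, show f * (f * x) = f * x by rw [← mul_assoc, hf]⟩,
       ⟨(1 - f) * x, show (1 - f) * ((1 - f) * x) = (1 - f) * x by rw [← mul_assoc, hf']⟩)
    invFun := fun p => (p.1 : R) + (p.2 : R)
    left_inv := fun x => by
      show f * x + (1 - f) * x = x
      rw [← add_mul, add_sub_cancel, one_mul]
    right_inv := fun p => by
      obtain ⟨u, v⟩ := p
      have hu : f * (u : R) = u := u.2
      have hv : (1 - f) * (v : R) = v := v.2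
      have hfv : f * (v : R) = 0 := by
        rw [← hv, ← mul_assoc, e3, zero_mul]
      have h1fu : (1 - f) * (u : R) = 0 := by
        rw [← hu, ← mul_assoc, e1, zero_mul]
      refine Prod.ext (Subtype.ext ?_) (Subtype.ext ?_)
      · show f * ((u : R) + (v : R)) = u
        rw [mul_add, hu, hfv, add_zero]
      · show (1 - f) * ((u : R) + (v : R)) = v
        rw [mul_add, hv, h1fu, zero_add]
    map_mul' := fun x y => by
      refine Prod.ext (Subtype.ext ?_) (Subtype.ext ?_)
      · show f * (x * y) = (f * x) * (f * y)
        have h1 : f * x * f = f * x := by rw [mul_assoc, ← hc x, ← mul_assoc, hf]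
        rw [← mul_assoc (f * x) f y, h1, mul_assoc]
      · show (1 - f) * (x * y) = ((1 - f) * x) * ((1 - f) * y)
        have h1 : (1 - f) * x * (1 - f) = (1 - f) * x := by
          rw [mul_assoc, ← hc' x, ← mul_assoc, hf']
        rw [← mul_assoc ((1 - f) * x) (1 - f) y, h1, mul_assoc]
    map_add' := fun x y => by
      refine Prod.ext (Subtype.ext ?_) (Subtype.ext ?_)
      · show f * (x + y) = f * x + f * y
        rw [mul_add]
      · show (1 - f) * (x + y) = (1 - f) * x + (1 - f) * y
        rw [mul_add] }

theorem not_zd_of_isUnit {a : R} (hu : IsUnit a) : ¬ IsZeroDivisorPair a := by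
  rintro ⟨b, c, hb, -, hab, -⟩
  apply hb
  calc b = (↑hu.unit⁻¹ * a) * b := by rw [IsUnit.val_inv_mul, one_mul]
    _ = ↑hu.unit⁻¹ * (a * b) := by rw [mul_assoc]
    _ = 0 := by rw [hab, mul_zero]

theorem stmt7 (R : Type u) [Ring R]
    (h : ∀ a : R, IsZeroDivisorPair a → IsUniquelyWeaklyNilClean a) :
    (∀ a : R, IsZeroDivisorPair a → IsNilpotent a) ∨
      ∃ (A B : Type u) (_ : Ring A) (_ : Ring B),
        UniquelyWeaklyNilCleanRing A ∧ UniquelyWeaklyNilCleanRing B ∧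
          Nonempty (R ≃+* A × B) := by
  by_cases hD : ∀ a : R, IsZeroDivisorPair a → IsNilpotent a
  · exact Or.inl hD
  · right
    push_neg at hD
    obtain ⟨a, hzd, hnil⟩ := hD
    obtain ⟨⟨w, e, hw, he, heq⟩, -⟩ := h a hzd
    obtain ⟨f, hf, hef⟩ : ∃ f : R, f * f = f ∧ (e = f ∨ e = -f) := by
      rcases he with hee | hee
      · exact ⟨e, hee, Or.inl rfl⟩
      · exact ⟨-e, hee, Or.inr (neg_neg e).symm⟩
    have hf0 : f ≠ 0 := by
      rintro rfl
      have he0 : e = 0 := by rcases hef with rfl | rfl <;> simp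
      exact hnil (by rw [heq, he0, add_zero]; exact hw)
    have hf1 : f ≠ 1 := by
      rintro rfl
      rcases hef with rfl | rfl
      · exact not_zd_of_isUnit (heq ▸ hw.isUnit_add_one) hzd
      · have hu : IsUnit a := by
          have : a = -(1 - w) := by rw [heq]; abel
          rw [this]
          exact hw.isUnit_one_sub.neg
        exact not_zd_of_isUnit hu hzd
    have hc : ∀ x : R, f * x = x * f := central_of_h f hf hf1 h
    have e1 : (1 - f) * f = 0 := by rw [sub_mul, one_mul, hf, sub_self]
    have hf' : (1 - f) * (1 - f) = 1 - f := by rw [mul_sub, mul_one, e1, sub_zero]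
    have hc' : ∀ x : R, (1 - f) * x = x * (1 - f) := by
      intro x
      rw [sub_mul, one_mul, mul_sub, mul_one, hc]
    have hf1' : (1 : R) - f ≠ 1 := by
      intro h0
      exact hf0 (by rwa [sub_eq_self] at h0)
    exact ⟨corner f, corner (1 - f), cornerRing f hf hc, cornerRing (1 - f) hf' hc',
      corner_uwnc f hf hc hf1 h, corner_uwnc (1 - f) hf' hc' hf1' h,
      ⟨cornerEquiv f hf hc hf' hc'⟩⟩
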